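/- Fix ε̃ ∈ (0,1]. Given a RochetNet menu M = {(x^(k), p^(k))}_{k∈{0,...,K}}, define M̃ by x̃^(k)_j = ε̃ ⌊x^(k)_j / ε̃⌋ and p̃^(k) = (1 − √ε̃) p^(k). Then for every λ ∈ [0,1], the convex combination M' = λ M + (1−λ) M̃ satisfies Rev(M') ≥ Rev(M) − 2√ε̃. -/

import Mathlib

open MeasureTheory Finset

namespace RN

/-- A RochetNet menu: for each of the `K+1` option indices, an allocation in `[0,1]^n`
and a price. -/
abbrev Menu (n K : ℕ) := Fin (K + 1) → (Fin n → ℝ) × ℝ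

/-- Inner product of a valuation and an allocation. -/
def dotp {n : ℕ} (v x : Fin n → ℝ) : ℝ := ∑ j, v j * x j

/-- A valid menu: allocations in `[0,1]^n`, nonnegative prices, default option `(0,0)`. -/
def IsMenu {n K : ℕ} (M : Menu n K) : Prop :=
  (∀ k j, 0 ≤ (M k).1 j ∧ (M k).1 j ≤ 1) ∧ (∀ k, 0 ≤ (M k).2) ∧ M 0 = 0

/-- Utility of option `k` for valuation `v`. -/
def util {n K : ℕ} (M : Menu n K) (v : Fin n → ℝ) (k : Fin (K + 1)) : ℝ :=
  dotp v (M k).1 - (M k).2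

/-- Price extracted at valuation `v`: the maximal price among utility-maximizing options. -/
noncomputable def price {n K : ℕ} (M : Menu n K) (v : Fin n → ℝ) : ℝ :=
  sSup {p : ℝ | ∃ k, (∀ k', util M v k' ≤ util M v k) ∧ p = (M k).2}

/-- Option `k` is the buyer's selected option at `v`: it maximizes utility and, among
utility maximizers, has maximal price. -/
def Selected {n K : ℕ} (M : Menu n K) (v : Fin n → ℝ) (k : Fin (K + 1)) : Prop :=
  (∀ k', util M v k' ≤ util M v k) ∧ (M k).2 = price M v

/-- The set of valuations. -/
def V (n : ℕ) : Set (Fin n → ℝ) :=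
  {v | (∀ j, 0 ≤ v j ∧ v j ≤ 1) ∧ ∑ j, v j ≤ 1}

/-- Expected revenue of menu `M` under valuation distribution `F`. -/
noncomputable def Rev {n K : ℕ} (F : Measure (Fin n → ℝ)) (M : Menu n K) : ℝ :=
  ∫ v, price M v ∂F

/-- Option-wise convex combination `lam • M + (1 - lam) • M'` of two menus. -/
noncomputable def comb {n K : ℕ} (lam : ℝ) (M M' : Menu n K) : Menu n K :=
  fun k => (fun j => lam * (M k).1 j + (1 - lam) * (M' k).1 j,
            lam * (M k).2 + (1 - lam) * (M' k).2)

/-- `M` is `ε`-reducible: some subset `K'` of options containing the default option, of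
cardinality at most `√(K+1)`, contains the buyer's selected option with probability
at least `1 - ε`. -/
def Reducible {n K : ℕ} (F : Measure (Fin n → ℝ)) (M : Menu n K) (ε : ℝ) : Prop :=
  ∃ K' : Finset (Fin (K + 1)), 0 ∈ K' ∧ (K'.card : ℝ) ≤ Real.sqrt (K + 1) ∧
    (F {v | ∃ k ∈ K', Selected M v k}).toReal ≥ 1 - ε

/-- `M₁` and `M₂` are `ε`-mode-connected by a piecewise linear path with `pieces` linear
pieces, all whose menus are valid and have revenue at least `min (Rev M₁) (Rev M₂) - ε`. -/
def PLConnected {n K : ℕ} (F : Measure (Fin n → ℝ)) (M₁ M₂ : Menu n K) (ε : ℝ)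
    (pieces : ℕ) : Prop :=
  ∃ P : Fin (pieces + 1) → Menu n K, P 0 = M₁ ∧ P (Fin.last pieces) = M₂ ∧
    (∀ i, IsMenu (P i)) ∧
    ∀ i : Fin pieces, ∀ lam ∈ Set.Icc (0 : ℝ) 1,
      Rev F (comb lam (P i.castSucc) (P i.succ)) ≥ min (Rev F M₁) (Rev F M₂) - ε

/-- The discretized menu: each allocation coordinate is rounded down to a multiple of
`εt` and each price is rescaled by `1 - √εt`. -/
noncomputable def discretize {n K : ℕ} (εt : ℝ) (M : Menu n K) : Menu n K :=
  fun k => (fun j => εt * (⌊(M k).1 j / εt⌋₊ : ℝ), (1 - Real.sqrt εt) * (M k).2)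


/-! ### Auxiliary lemmas -/

section Aux

variable {n K : ℕ}

lemma pset_finite (M : Menu n K) (v : Fin n → ℝ) :
    {p : ℝ | ∃ k, (∀ k', util M v k' ≤ util M v k) ∧ p = (M k).2}.Finite :=
  (Set.finite_range fun k => (M k).2).subset (by rintro p ⟨k, _, rfl⟩; exact ⟨k, rfl⟩)

lemma pset_nonempty (M : Menu n K) (v : Fin n → ℝ) :
    {p : ℝ | ∃ k, (∀ k', util M v k' ≤ util M v k) ∧ p = (M k).2}.Nonempty := by
  obtain ⟨k, hk⟩ := Finite.exists_max (util M v)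
  exact ⟨(M k).2, k, hk, rfl⟩

lemma exists_selected (M : Menu n K) (v : Fin n → ℝ) :
    ∃ k, (∀ k', util M v k' ≤ util M v k) ∧ (M k).2 = price M v := by
  have h := (pset_nonempty M v).csSup_mem (pset_finite M v)
  obtain ⟨k, hk, hp⟩ := h
  exact ⟨k, hk, hp.symm⟩

lemma le_price (M : Menu n K) (v : Fin n → ℝ) {k : Fin (K + 1)}
    (hk : ∀ k', util M v k' ≤ util M v k) : (M k).2 ≤ price M v :=
  le_csSup (pset_finite M v).bddAbove ⟨k, hk, rfl⟩

lemma price_nonneg (M : Menu n K) (hp : ∀ k, 0 ≤ (M k).2) (v : Fin n → ℝ) :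
    0 ≤ price M v := by
  obtain ⟨k, hk, hpk⟩ := exists_selected M v
  rw [← hpk]; exact hp k

lemma price_le (M : Menu n K) (v : Fin n → ℝ) :
    price M v ≤ Finset.univ.sup' ⟨0, Finset.mem_univ 0⟩ (fun k => (M k).2) := by
  obtain ⟨k, hk, hpk⟩ := exists_selected M v
  rw [← hpk]; exact Finset.le_sup' (fun k => (M k).2) (Finset.mem_univ k)

lemma measurable_util (M : Menu n K) (k : Fin (K + 1)) :
    Measurable fun v => util M v k := by
  unfold util dotp
  exact (Finset.measurable_sum _ fun j _ =>
    (measurable_pi_apply j).mul_const _).sub measurable_const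

lemma measurableSet_argmax (M : Menu n K) (k : Fin (K + 1)) :
    MeasurableSet {v : Fin n → ℝ | ∀ k', util M v k' ≤ util M v k} := by
  have h : {v : Fin n → ℝ | ∀ k', util M v k' ≤ util M v k} =
      ⋂ k', {v | util M v k' ≤ util M v k} := by
    ext v; simp [Set.mem_iInter]
  rw [h]
  exact MeasurableSet.iInter fun k' =>
    measurableSet_le (measurable_util M k') (measurable_util M k)

lemma price_eq (M : Menu n K) (hp : ∀ k, 0 ≤ (M k).2) (v : Fin n → ℝ) :
    price M v = Finset.univ.sup' ⟨0, Finset.mem_univ 0⟩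
      (fun k => Set.indicator {w : Fin n → ℝ | ∀ k', util M w k' ≤ util M w k}
        (fun _ => (M k).2) v) := by
  apply le_antisymm
  · obtain ⟨k, hk, hpk⟩ := exists_selected M v
    rw [← hpk]
    have hmem : v ∈ {w : Fin n → ℝ | ∀ k', util M w k' ≤ util M w k} := hk
    calc (M k).2
        = Set.indicator {w : Fin n → ℝ | ∀ k', util M w k' ≤ util M w k}
            (fun _ => (M k).2) v := by rw [Set.indicator_of_mem hmem]
      _ ≤ _ := Finset.le_sup'
          (fun k => Set.indicator {w : Fin n → ℝ | ∀ k', util M w k' ≤ util M w k}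
            (fun _ => (M k).2) v) (Finset.mem_univ k)
  · apply Finset.sup'_le
    intro k _
    by_cases hk : v ∈ {w : Fin n → ℝ | ∀ k', util M w k' ≤ util M w k}
    · rw [Set.indicator_of_mem hk]; exact le_price M v hk
    · rw [Set.indicator_of_notMem hk]; exact price_nonneg M hp v

lemma measurable_price (M : Menu n K) (hp : ∀ k, 0 ≤ (M k).2) :
    Measurable (price M) := by
  have h : price M = fun v => Finset.univ.sup' ⟨0, Finset.mem_univ 0⟩
      (fun k => Set.indicator {w : Fin n → ℝ | ∀ k', util M w k' ≤ util M w k}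
        (fun _ => (M k).2) v) := funext (price_eq M hp)
  rw [h]
  have h2 : (fun v => Finset.univ.sup' (⟨0, Finset.mem_univ 0⟩ :
        (Finset.univ : Finset (Fin (K + 1))).Nonempty)
      (fun k => Set.indicator {w : Fin n → ℝ | ∀ k', util M w k' ≤ util M w k}
        (fun _ => (M k).2) v))
      = Finset.univ.sup' ⟨0, Finset.mem_univ 0⟩
        (fun k => Set.indicator {w : Fin n → ℝ | ∀ k', util M w k' ≤ util M w k}
          (fun _ => (M k).2)) := by
    funext v
    exact (Finset.sup'_apply _ _ v).symm
  rw [h2]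
  exact Finset.measurable_sup' ⟨0, Finset.mem_univ 0⟩
    (fun k _ => measurable_const.indicator (measurableSet_argmax M k))

lemma integrable_price (F : Measure (Fin n → ℝ)) [IsProbabilityMeasure F]
    (M : Menu n K) (hp : ∀ k, 0 ≤ (M k).2) : Integrable (price M) F := by
  refine (integrable_const (Finset.univ.sup' ⟨0, Finset.mem_univ 0⟩
    fun k => (M k).2)).mono' (measurable_price M hp).aestronglyMeasurable
    (Filter.Eventually.of_forall fun v => ?_)
  rw [Real.norm_eq_abs, abs_of_nonneg (price_nonneg M hp v)]
  exact price_le M v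

lemma measurableSet_V (n : ℕ) : MeasurableSet (V n) := by
  have h1 : MeasurableSet {v : Fin n → ℝ | ∑ j, v j ≤ 1} :=
    measurableSet_le (Finset.measurable_sum _ fun j _ => measurable_pi_apply j)
      measurable_const
  have h2 : MeasurableSet {v : Fin n → ℝ | ∀ j, 0 ≤ v j ∧ v j ≤ 1} := by
    have h : {v : Fin n → ℝ | ∀ j, 0 ≤ v j ∧ v j ≤ 1} =
        ⋂ j, ({v : Fin n → ℝ | 0 ≤ v j} ∩ {v : Fin n → ℝ | v j ≤ 1}) := by
      ext v; simp [Set.mem_iInter]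
    rw [h]
    exact MeasurableSet.iInter fun j =>
      (measurableSet_le measurable_const (measurable_pi_apply j)).inter
        (measurableSet_le (measurable_pi_apply j) measurable_const)
  exact h2.inter h1

lemma pointwise_bound (εt : ℝ) (hε0 : 0 < εt) (hε1 : εt ≤ 1) (M : Menu n K)
    (hM : IsMenu M) {lam : ℝ} (hlam : lam ∈ Set.Icc (0 : ℝ) 1) {v : Fin n → ℝ}
    (hv : v ∈ V n) :
    price M v - 2 * Real.sqrt εt ≤ price (comb lam M (discretize εt M)) v := by
  set s := Real.sqrt εt with hs_def
  have hs0 : 0 < s := Real.sqrt_pos.mpr hε0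
  have hs1 : s ≤ 1 := Real.sqrt_le_one.mpr hε1
  have hss : s * s = εt := Real.mul_self_sqrt hε0.le
  obtain ⟨hvj, hvsum⟩ := hv
  rcases eq_or_lt_of_le hlam.2 with h1 | h1
  · -- lam = 1 : the combination is just M
    have hcomb : comb lam M (discretize εt M) = M := by
      funext k
      rw [h1]
      unfold comb
      simp
    rw [hcomb]
    nlinarith [price_nonneg M hM.2.1 v]
  · -- lam < 1
    set α := (1 - lam) * s with hα_def
    have hα0 : 0 < α := mul_pos (by linarith) hs0
    have hαs : α ≤ s := by nlinarith [hlam.1]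
    set M' := comb lam M (discretize εt M) with hM'_def
    have hp' : ∀ k, (M' k).2 = (1 - α) * (M k).2 := by
      intro k
      show lam * (M k).2 + (1 - lam) * ((1 - s) * (M k).2) = (1 - (1 - lam) * s) * (M k).2
      ring
    -- bounds on the rounded allocation
    have hfloor : ∀ (x : ℝ), 0 ≤ x →
        x - εt ≤ εt * (⌊x / εt⌋₊ : ℝ) ∧ εt * (⌊x / εt⌋₊ : ℝ) ≤ x := by
      intro x hx
      have h1 : (⌊x / εt⌋₊ : ℝ) ≤ x / εt := Nat.floor_le (div_nonneg hx hε0.le)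
      have h2 : x / εt - 1 < (⌊x / εt⌋₊ : ℝ) := Nat.sub_one_lt_floor _
      constructor
      · have := (mul_lt_mul_iff_right₀ hε0).mpr h2
        rw [mul_sub, mul_one, mul_div_cancel₀ _ hε0.ne'] at this
        linarith
      · have := (mul_le_mul_iff_right₀ hε0).mpr h1
        rwa [mul_div_cancel₀ _ hε0.ne'] at this
    have hdub : ∀ k, dotp v (M' k).1 ≤ dotp v (M k).1 := by
      intro k
      apply Finset.sum_le_sum
      intro j _
      have hx0 := (hM.1 k j).1
      have hfl := (hfloor ((M k).1 j) hx0).2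
      have hterm : lam * (M k).1 j + (1 - lam) * (εt * (⌊(M k).1 j / εt⌋₊ : ℝ))
          ≤ (M k).1 j := by nlinarith [hlam.1]
      exact mul_le_mul_of_nonneg_left hterm (hvj j).1
    have hdlb : ∀ k, dotp v (M k).1 - (1 - lam) * εt ≤ dotp v (M' k).1 := by
      intro k
      have hc : 0 ≤ (1 - lam) * εt := mul_nonneg (by linarith) hε0.le
      have step1 : dotp v (M k).1 - (1 - lam) * εt
          ≤ dotp v (M k).1 - (1 - lam) * εt * (∑ j, v j) := by
        nlinarith [hvsum, hc]
      have step2 : dotp v (M k).1 - (1 - lam) * εt * (∑ j, v j)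
          = ∑ j, (v j * (M k).1 j - (1 - lam) * εt * v j) := by
        unfold dotp
        rw [Finset.mul_sum, ← Finset.sum_sub_distrib]
      have step3 : ∑ j, (v j * (M k).1 j - (1 - lam) * εt * v j)
          ≤ dotp v (M' k).1 := by
        apply Finset.sum_le_sum
        intro j _
        have hx0 := (hM.1 k j).1
        have hfl := (hfloor ((M k).1 j) hx0).1
        have hv0 := (hvj j).1
        have hM'1 : (M' k).1 j
            = lam * (M k).1 j + (1 - lam) * (εt * (⌊(M k).1 j / εt⌋₊ : ℝ)) := rfl
        rw [hM'1]
        nlinarith [mul_nonneg (mul_nonneg hv0 (show (0:ℝ) ≤ 1 - lam by linarith))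
          (show (0:ℝ) ≤ εt * (⌊(M k).1 j / εt⌋₊ : ℝ) - ((M k).1 j - εt) by linarith)]
      linarith [step1, step2 ▸ step3]
    have hub : ∀ k, util M' v k ≤ util M v k + α * (M k).2 := by
      intro k
      have h := hdub k
      unfold util
      rw [hp' k]
      nlinarith
    have hlb : ∀ k, util M v k - (1 - lam) * εt + α * (M k).2 ≤ util M' v k := by
      intro k
      have h := hdlb k
      unfold util
      rw [hp' k]
      nlinarith
    obtain ⟨k0, hk0max, hk0p⟩ := exists_selected M v
    obtain ⟨k1, hk1max⟩ := Finite.exists_max (util M' v)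
    have hle : (1 - α) * (M k1).2 ≤ price M' v := by
      rw [← hp' k1]
      exact le_price M' v hk1max
    have hεα : (1 - lam) * εt = α * s := by rw [hα_def, ← hss]; ring
    have hchain : α * (M k0).2 - α * s ≤ α * (M k1).2 := by
      have h1 := hlb k0
      have h2 := hub k1
      have h3 := hk1max k0
      have h4 := hk0max k1
      rw [hεα] at h1
      linarith
    have hp1 : (M k0).2 - s ≤ (M k1).2 := by
      have h := hchain
      have : α * ((M k0).2 - s) ≤ α * (M k1).2 := by nlinarith
      exact le_of_mul_le_mul_left this hα0
    have hp0nn : 0 ≤ (M k0).2 := hM.2.1 k0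
    have hp0le1 : (M k0).2 ≤ 1 := by
      have h0 : util M v 0 = 0 := by
        unfold util dotp
        rw [hM.2.2]
        simp
      have hge : 0 ≤ util M v k0 := h0 ▸ hk0max 0
      have hd1 : dotp v (M k0).1 ≤ ∑ j, v j := by
        apply Finset.sum_le_sum
        intro j _
        calc v j * (M k0).1 j ≤ v j * 1 :=
          mul_le_mul_of_nonneg_left (hM.1 k0 j).2 (hvj j).1
        _ = v j := mul_one _
      unfold util at hge
      linarith
    have hfinal : (M k0).2 - 2 * s ≤ (1 - α) * (M k1).2 := by
      have hmul : (1 - α) * ((M k0).2 - s) ≤ (1 - α) * (M k1).2 :=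
        mul_le_mul_of_nonneg_left hp1 (by linarith)
      nlinarith [mul_nonneg hα0.le (sub_nonneg.mpr hp0le1), mul_nonneg hα0.le hs0.le]
    rw [← hk0p]
    linarith

end Aux

/-- For `εt ∈ (0,1]`, every convex combination of a menu `M` and its
discretization has revenue at least `Rev M - 2√εt`. -/
theorem statement8 {n K : ℕ} (F : Measure (Fin n → ℝ)) [IsProbabilityMeasure F]
    (hFV : F (V n) = 1) (εt : ℝ) (hε0 : 0 < εt) (hε1 : εt ≤ 1)
    (M : Menu n K) (hM : IsMenu M) :
    ∀ lam ∈ Set.Icc (0 : ℝ) 1,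
      Rev F (comb lam M (discretize εt M)) ≥ Rev F M - 2 * Real.sqrt εt := by
  intro lam hlam
  have hs0 : 0 ≤ Real.sqrt εt := Real.sqrt_nonneg εt
  have hs1 : Real.sqrt εt ≤ 1 := Real.sqrt_le_one.mpr hε1
  set M' := comb lam M (discretize εt M) with hM'_def
  have hp' : ∀ k, 0 ≤ (M' k).2 := by
    intro k
    have hpk := hM.2.1 k
    show 0 ≤ lam * (M k).2 + (1 - lam) * ((1 - Real.sqrt εt) * (M k).2)
    have h1 : 0 ≤ lam * (M k).2 := mul_nonneg hlam.1 hpk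
    have h2 : 0 ≤ (1 - lam) * ((1 - Real.sqrt εt) * (M k).2) :=
      mul_nonneg (by linarith [hlam.2]) (mul_nonneg (by linarith) hpk)
    linarith
  have hae : ∀ᵐ v ∂F, v ∈ V n := by
    rw [MeasureTheory.ae_iff]
    have hc : {v : Fin n → ℝ | ¬ v ∈ V n} = (V n)ᶜ := rfl
    rw [hc, measure_compl (measurableSet_V n) (measure_ne_top F _), hFV, measure_univ]
    simp
  have hptw : ∀ᵐ v ∂F, price M v - 2 * Real.sqrt εt ≤ price M' v :=
    hae.mono fun v hv => pointwise_bound εt hε0 hε1 M hM hlam hv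
  have hint1 : Integrable (price M) F := integrable_price F M hM.2.1
  have hint2 : Integrable (price M') F := integrable_price F M' hp'
  have hmono : ∫ v, (price M v - 2 * Real.sqrt εt) ∂F ≤ ∫ v, price M' v ∂F :=
    integral_mono_ae (hint1.sub (integrable_const _)) hint2 hptw
  have heq : ∫ v, (price M v - 2 * Real.sqrt εt) ∂F
      = Rev F M - 2 * Real.sqrt εt := by
    rw [integral_sub hint1 (integrable_const _), integral_const, probReal_univ]
    simp [Rev]
  rw [ge_iff_le, ← heq]
  exact hmono


end RN
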